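/- arXiv:2201.00667 — 2 statements merged into one kernel-verified Lean document; each statement's English description precedes it below -/
import Mathlib

section
/- Let Z be a random real symmetric n×n orthogonal projection matrix (taking finitely many values) with E[Z] positive definite. Then the convergence rate ρ = 1 − λ_min(E[Z]) satisfies 0 ≤ 1 − E[rank(Z)]/n ≤ ρ < 1. -/
open Matrix BigOperators

lemma trace_eq_sum_eig {n : ℕ} {A : Matrix (Fin n) (Fin n) ℝ} (hA : A.IsHermitian) :
    A.trace = ∑ i, hA.eigenvalues i := by
  conv_lhs => rw [hA.spectral_theorem, Unitary.conjStarAlgAut_apply]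
  rw [Matrix.trace_mul_cycle]
  have : (star (hA.eigenvectorUnitary : Matrix (Fin n) (Fin n) ℝ)) *
      (hA.eigenvectorUnitary : Matrix (Fin n) (Fin n) ℝ) = 1 := by
    exact (Matrix.mem_unitaryGroup_iff').mp (hA.eigenvectorUnitary).2
  rw [this, one_mul, Matrix.trace_diagonal]
  simp [RCLike.ofReal]

lemma eig_idem {n : ℕ} {A : Matrix (Fin n) (Fin n) ℝ} (hA : A.IsHermitian)
    (hid : A * A = A) (i : Fin n) : hA.eigenvalues i = 0 ∨ hA.eigenvalues i = 1 := by
  set U := (hA.eigenvectorUnitary : Matrix (Fin n) (Fin n) ℝ) with hUdef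
  have h : star U * A * U = diagonal (RCLike.ofReal ∘ hA.eigenvalues) := by
    have := hA.conjStarAlgAut_star_eigenvectorUnitary
    rw [Unitary.conjStarAlgAut_star_apply] at this
    exact this
  have hU : U * star U = 1 := (Matrix.mem_unitaryGroup_iff).mp (hA.eigenvectorUnitary).2
  have h2 : (diagonal (RCLike.ofReal ∘ hA.eigenvalues) : Matrix (Fin n) (Fin n) ℝ) *
      diagonal (RCLike.ofReal ∘ hA.eigenvalues) = diagonal (RCLike.ofReal ∘ hA.eigenvalues) := by
    rw [← h]
    calc star U * A * U * (star U * A * U) = star U * (A * (U * star U) * A) * U := by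
          noncomm_ring
      _ = star U * A * U := by rw [hU, mul_one, hid]
  rw [Matrix.diagonal_mul_diagonal] at h2
  have h3 := congrFun (Matrix.diagonal_injective.eq_iff.mp h2) i
  simp only [Function.comp_apply, Pi.mul_apply] at h3
  have h0 : hA.eigenvalues i * (hA.eigenvalues i - 1) = 0 := by
    have : hA.eigenvalues i * hA.eigenvalues i = hA.eigenvalues i := by exact_mod_cast h3
    nlinarith [this]
  rcases mul_eq_zero.mp h0 with h' | h'
  · exact Or.inl h'
  · right; linarith

lemma rank_eq_trace {n : ℕ} {A : Matrix (Fin n) (Fin n) ℝ} (hA : A.IsHermitian)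
    (hid : A * A = A) : (A.rank : ℝ) = A.trace := by
  rw [trace_eq_sum_eig hA, hA.rank_eq_card_non_zero_eigs]
  rw [Fintype.card_subtype, Finset.card_filter, Nat.cast_sum]
  apply Finset.sum_congr rfl
  intro i _
  rcases eig_idem hA hid i with h | h <;> simp [h]

/-- The sketch-and-project convergence rate `ρ = 1 − λ_min(E[Z])` satisfies
`0 ≤ 1 − E[rank Z]/n ≤ ρ < 1` when each realization of `Z` is a symmetric
orthogonal projection and `E[Z]` is positive definite. -/
theorem rate_bounds {n N : ℕ} [NeZero n]
    (Z : Fin N → Matrix (Fin n) (Fin n) ℝ)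
    (w : Fin N → ℝ) (hw : ∀ i, 0 ≤ w i) (hw1 : ∑ i, w i = 1)
    (hsym : ∀ i, (Z i)ᵀ = Z i) (hproj : ∀ i, Z i * Z i = Z i)
    (hpd : (∑ i, w i • Z i).PosDef) :
    0 ≤ 1 - (∑ i, w i * ((Z i).rank : ℝ)) / n
    ∧ 1 - (∑ i, w i * ((Z i).rank : ℝ)) / n ≤ 1 - ⨅ j, hpd.1.eigenvalues j
    ∧ 1 - ⨅ j, hpd.1.eigenvalues j < 1 := by
  have hn : (0 : ℝ) < n := by
    exact_mod_cast Nat.pos_of_ne_zero (NeZero.ne n)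
  have hherm : ∀ i, (Z i).IsHermitian := fun i => by
    rw [Matrix.IsHermitian, Matrix.conjTranspose]
    simp only [RCLike.star_def, starRingEnd_apply]
    ext a b; simpa using congrFun (congrFun (hsym i) a) b
  -- trace of A equals the weighted sum of ranks
  have htr : (∑ i, w i • Z i).trace = ∑ i, w i * ((Z i).rank : ℝ) := by
    rw [Matrix.trace_sum]
    apply Finset.sum_congr rfl
    intro i _
    rw [Matrix.trace_smul, rank_eq_trace (hherm i) (hproj i), smul_eq_mul]
  have htr2 : (∑ i, w i • Z i).trace = ∑ j, hpd.1.eigenvalues j := trace_eq_sum_eig hpd.1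
  -- the infimum is attained
  have hne : Nonempty (Fin n) := Fin.pos_iff_nonempty.mp (Nat.pos_of_ne_zero (NeZero.ne n))
  obtain ⟨j0, hj0⟩ := Finite.exists_min hpd.1.eigenvalues
  have hinf : (⨅ j, hpd.1.eigenvalues j) = hpd.1.eigenvalues j0 :=
    le_antisymm (ciInf_le (Finite.bddBelow_range _) j0) (le_ciInf hj0)
  have hpos : 0 < hpd.1.eigenvalues j0 := hpd.eigenvalues_pos j0
  -- S ≤ n
  have hSn : (∑ i, w i * ((Z i).rank : ℝ)) ≤ n := by
    calc (∑ i, w i * ((Z i).rank : ℝ)) ≤ ∑ i, w i * n := by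
          apply Finset.sum_le_sum
          intro i _
          apply mul_le_mul_of_nonneg_left _ (hw i)
          have := (Z i).rank_le_card_width
          simp only [Fintype.card_fin] at this
          exact_mod_cast this
      _ = n := by rw [← Finset.sum_mul, hw1, one_mul]
  -- n * λ ≤ S
  have hlS : (n : ℝ) * hpd.1.eigenvalues j0 ≤ ∑ i, w i * ((Z i).rank : ℝ) := by
    rw [← htr, htr2]
    calc (n : ℝ) * hpd.1.eigenvalues j0 = ∑ _j : Fin n, hpd.1.eigenvalues j0 := by
          simp [Finset.sum_const, mul_comm]
      _ ≤ ∑ j, hpd.1.eigenvalues j := Finset.sum_le_sum fun j _ => hj0 j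
  refine ⟨?_, ?_, ?_⟩
  · rw [sub_nonneg, div_le_one hn]; exact hSn
  · rw [sub_le_sub_iff_left, hinf, le_div_iff₀ hn, mul_comm]; exact hlS
  · rw [hinf]; linarith
end

section
/- Let Z₁,...,Z_q be symmetric orthogonal projections in ℝ^{n×n}, p ∈ Δ_q with Σpᵢ Zᵢ positive definite, and let x⁰, x⋆ ∈ ℝⁿ. Define the random sequence x^{t+1} = x^t − Z_{i_t}(x^t − x⋆) where i_t ∼ p i.i.d. Then E[‖x^t − x⋆‖² | x⁰] ≤ (1 − λ_min(Σᵢ pᵢZᵢ))^t ‖x⁰ − x⋆‖². -/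
open Matrix BigOperators

lemma dot_proj {n : ℕ} (Z : Matrix (Fin n) (Fin n) ℝ) (v : Fin n → ℝ) :
    (Z *ᵥ v) ⬝ᵥ (Z *ᵥ v) = v ⬝ᵥ ((Zᵀ * Z) *ᵥ v) := by
  rw [← Matrix.mulVec_mulVec, Matrix.dotProduct_mulVec v, Matrix.vecMul_transpose]

lemma eig_psd {n : ℕ} {A : Matrix (Fin n) (Fin n) ℝ} (hA : A.IsHermitian)
    (c : ℝ) (hc : ∀ j, c ≤ hA.eigenvalues j) : (A - c • 1).PosSemidef := by
  have hs := hA.spectral_theorem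
  have hU : (hA.eigenvectorUnitary : Matrix (Fin n) (Fin n) ℝ) *
      star (hA.eigenvectorUnitary : Matrix (Fin n) (Fin n) ℝ) = 1 :=
    Unitary.mul_star_self_of_mem hA.eigenvectorUnitary.2
  have key : A - c • 1 = (hA.eigenvectorUnitary : Matrix (Fin n) (Fin n) ℝ) *
      diagonal (fun j => hA.eigenvalues j - c) *
      star (hA.eigenvectorUnitary : Matrix (Fin n) (Fin n) ℝ) := by
    have : (diagonal (fun j => hA.eigenvalues j - c) : Matrix (Fin n) (Fin n) ℝ)
        = diagonal (RCLike.ofReal ∘ hA.eigenvalues) - c • 1 := by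
      simp [diagonal_sub, Matrix.smul_one_eq_diagonal, Function.comp]
    rw [this, Matrix.mul_sub, Matrix.sub_mul]
    nth_rw 1 [hs]
    rw [Unitary.conjStarAlgAut_apply]
    congr 1
    rw [Matrix.mul_smul, Matrix.mul_one, Matrix.smul_mul, hU]
  rw [key]
  exact (Matrix.PosSemidef.diagonal (fun j => by simpa using hc j)).mul_mul_conjTranspose_same _

lemma eig_quad {n : ℕ} [NeZero n] {A : Matrix (Fin n) (Fin n) ℝ} (hA : A.IsHermitian)
    (v : Fin n → ℝ) : (⨅ j, hA.eigenvalues j) * (v ⬝ᵥ v) ≤ v ⬝ᵥ (A *ᵥ v) := by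
  set c := ⨅ j, hA.eigenvalues j with hcdef
  have hc : ∀ j, c ≤ hA.eigenvalues j := fun j => ciInf_le (Set.Finite.bddBelow (Set.finite_range _)) j
  have h := (eig_psd hA c hc).dotProduct_mulVec_nonneg v
  simp only [star_trivial, Matrix.sub_mulVec, Matrix.smul_mulVec, Matrix.one_mulVec,
    dotProduct_sub, dotProduct_smul, smul_eq_mul] at h
  linarith

lemma dot_self_eigvec {n : ℕ} {A : Matrix (Fin n) (Fin n) ℝ} (hA : A.IsHermitian) (j : Fin n) :
    (⇑(hA.eigenvectorBasis j) : Fin n → ℝ) ⬝ᵥ ⇑(hA.eigenvectorBasis j) = 1 := by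
  have h := hA.eigenvectorBasis.orthonormal.1 j
  have h2 : (inner ℝ (hA.eigenvectorBasis j) (hA.eigenvectorBasis j) : ℝ) = 1 := by
    rw [real_inner_self_eq_norm_sq, h]; norm_num
  rw [← h2, PiLp.inner_apply]
  simp [dotProduct, pow_two]

lemma step_eq {n q : ℕ} (Z : Fin q → Matrix (Fin n) (Fin n) ℝ)
    (hsym : ∀ i, (Z i)ᵀ = Z i) (hproj : ∀ i, Z i * Z i = Z i)
    (p : Fin q → ℝ) (hp1 : ∑ i, p i = 1) (v : Fin n → ℝ) :
    ∑ i, p i * ((v - Z i *ᵥ v) ⬝ᵥ (v - Z i *ᵥ v))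
      = v ⬝ᵥ v - v ⬝ᵥ ((∑ i, p i • Z i) *ᵥ v) := by
  have hZ : ∀ i, (v - Z i *ᵥ v) ⬝ᵥ (v - Z i *ᵥ v) = v ⬝ᵥ v - v ⬝ᵥ (Z i *ᵥ v) := by
    intro i
    have h1 : (Z i *ᵥ v) ⬝ᵥ (Z i *ᵥ v) = v ⬝ᵥ (Z i *ᵥ v) := by
      rw [dot_proj, hsym i, hproj i]
    have h2 : (Z i *ᵥ v) ⬝ᵥ v = v ⬝ᵥ (Z i *ᵥ v) := dotProduct_comm _ _
    rw [dotProduct_sub, sub_dotProduct, sub_dotProduct, h1, h2]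
    ring
  let L : Matrix (Fin n) (Fin n) ℝ →ₗ[ℝ] ℝ :=
  { toFun := fun M => v ⬝ᵥ (M *ᵥ v),
    map_add' := fun A B => by
      show v ⬝ᵥ ((A + B) *ᵥ v) = v ⬝ᵥ (A *ᵥ v) + v ⬝ᵥ (B *ᵥ v)
      rw [Matrix.add_mulVec, dotProduct_add],
    map_smul' := fun c M => by
      show v ⬝ᵥ ((c • M) *ᵥ v) = (RingHom.id ℝ) c • (v ⬝ᵥ (M *ᵥ v))
      rw [Matrix.smul_mulVec, dotProduct_smul, RingHom.id_apply] }
  have hdd : v ⬝ᵥ ((∑ i, p i • Z i) *ᵥ v) = ∑ i, p i * (v ⬝ᵥ (Z i *ᵥ v)) := by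
    have h1 : v ⬝ᵥ ((∑ i, p i • Z i) *ᵥ v) = ∑ i, v ⬝ᵥ ((p i • Z i) *ᵥ v) :=
      map_sum L (fun i => p i • Z i) Finset.univ
    rw [h1]
    simp only [Matrix.smul_mulVec, dotProduct_smul, smul_eq_mul]
  simp only [hZ, hdd, mul_sub, Finset.sum_sub_distrib, ← Finset.sum_mul, hp1, one_mul]

lemma dot_self_nonneg {n : ℕ} (w : Fin n → ℝ) : 0 ≤ w ⬝ᵥ w :=
  Finset.sum_nonneg fun i _ => mul_self_nonneg _

lemma step_le {n q : ℕ} [NeZero n] (Z : Fin q → Matrix (Fin n) (Fin n) ℝ)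
    (hsym : ∀ i, (Z i)ᵀ = Z i) (hproj : ∀ i, Z i * Z i = Z i)
    (p : Fin q → ℝ) (hp1 : ∑ i, p i = 1)
    (hpd : (∑ i, p i • Z i).PosDef) (v : Fin n → ℝ) :
    ∑ i, p i * ((v - Z i *ᵥ v) ⬝ᵥ (v - Z i *ᵥ v))
      ≤ (1 - ⨅ j, hpd.1.eigenvalues j) * (v ⬝ᵥ v) := by
  rw [step_eq Z hsym hproj p hp1 v]
  have h := eig_quad hpd.1 v
  nlinarith [h]

lemma inf_le_one {n q : ℕ} [NeZero n] (Z : Fin q → Matrix (Fin n) (Fin n) ℝ)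
    (hsym : ∀ i, (Z i)ᵀ = Z i) (hproj : ∀ i, Z i * Z i = Z i)
    (p : Fin q → ℝ) (hp : ∀ i, 0 ≤ p i) (hp1 : ∑ i, p i = 1)
    (hpd : (∑ i, p i • Z i).PosDef) :
    (⨅ j, hpd.1.eigenvalues j) ≤ 1 := by
  have hne : Nonempty (Fin n) := ⟨⟨0, Nat.pos_of_ne_zero (NeZero.ne n)⟩⟩
  obtain ⟨j0⟩ := hne
  refine le_trans (ciInf_le (Set.Finite.bddBelow (Set.finite_range _)) j0) ?_
  set u : Fin n → ℝ := ⇑(hpd.1.eigenvectorBasis j0) with hu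
  have huu : u ⬝ᵥ u = 1 := dot_self_eigvec hpd.1 j0
  have hAu : (∑ i, p i • Z i) *ᵥ u = hpd.1.eigenvalues j0 • u :=
    hpd.1.mulVec_eigenvectorBasis j0
  have hle : u ⬝ᵥ ((∑ i, p i • Z i) *ᵥ u) ≤ u ⬝ᵥ u := by
    have h := step_eq Z hsym hproj p hp1 u
    have hpos : 0 ≤ ∑ i, p i * ((u - Z i *ᵥ u) ⬝ᵥ (u - Z i *ᵥ u)) :=
      Finset.sum_nonneg fun i _ => mul_nonneg (hp i) (dot_self_nonneg _)
    linarith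
  rw [hAu, dotProduct_smul, smul_eq_mul, huu] at hle
  linarith [hle]

/-- The trajectory of the sketch-and-project iteration driven by a finite index
sequence `σ`: `x⁰ = x0`, `x^{t+1} = x^t − Z_{σ_t}(x^t − x⋆)`. -/
def traj {n q : ℕ} (Z : Fin q → Matrix (Fin n) (Fin n) ℝ)
    (x0 xs : Fin n → ℝ) : ∀ t : ℕ, (Fin t → Fin q) → (Fin n → ℝ)
  | 0, _ => x0
  | (t + 1), σ =>
      traj Z x0 xs t (fun s => σ s.castSucc)
        - (Z (σ (Fin.last t))).mulVec (traj Z x0 xs t (fun s => σ s.castSucc) - xs)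

/-- Convergence of the nonadaptive sketch-and-project method:
`E[‖x^t − x⋆‖²] ≤ (1 − λ_min(Σᵢ pᵢZᵢ))^t ‖x⁰ − x⋆‖²`, the expectation being
over i.i.d. indices `i_0,…,i_{t−1} ∼ p`. -/
theorem sketch_and_project_convergence {n q : ℕ} [NeZero n]
    (Z : Fin q → Matrix (Fin n) (Fin n) ℝ)
    (hsym : ∀ i, (Z i)ᵀ = Z i) (hproj : ∀ i, Z i * Z i = Z i)
    (p : Fin q → ℝ) (hp : ∀ i, 0 ≤ p i) (hp1 : ∑ i, p i = 1)
    (hpd : (∑ i, p i • Z i).PosDef) (x0 xs : Fin n → ℝ) (t : ℕ) :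
    ∑ σ : Fin t → Fin q, (∏ s, p (σ s)) * ∑ k, (traj Z x0 xs t σ k - xs k) ^ 2
      ≤ (1 - ⨅ j, hpd.1.eigenvalues j) ^ t * ∑ k, (x0 k - xs k) ^ 2 := by
  induction t with
  | zero => simp [traj]
  | succ t ih =>
    set c := ⨅ j, hpd.1.eigenvalues j with hcdef
    have hcle : c ≤ 1 := inf_le_one Z hsym hproj p hp hp1 hpd
    have h1c : 0 ≤ 1 - c := by linarith
    rw [← (Fin.snocEquiv (fun _ => Fin q)).sum_comp, Fintype.sum_prod_type, Finset.sum_comm]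
    simp only [Fin.snocEquiv, Equiv.coe_fn_mk]
    have key : ∀ τ : Fin t → Fin q,
        ∑ i, (∏ s : Fin (t+1), p (Fin.snoc τ i s)) *
            ∑ k, (traj Z x0 xs (t+1) (Fin.snoc τ i) k - xs k) ^ 2
          ≤ (1 - c) * ((∏ s, p (τ s)) * ∑ k, (traj Z x0 xs t τ k - xs k) ^ 2) := by
      intro τ
      set w : Fin n → ℝ := fun k => traj Z x0 xs t τ k - xs k with hw
      have hwdot : ∑ k, (traj Z x0 xs t τ k - xs k) ^ 2 = w ⬝ᵥ w := by
        simp [dotProduct, pow_two, hw]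
      have htraj : ∀ i, ∑ k, (traj Z x0 xs (t+1) (Fin.snoc τ i) k - xs k) ^ 2
          = (w - Z i *ᵥ w) ⬝ᵥ (w - Z i *ᵥ w) := by
        intro i
        have h0 : (fun s : Fin t => (Fin.snoc τ i : Fin (t+1) → Fin q) s.castSucc) = τ := by
          funext s; simp
        have h1 : traj Z x0 xs t τ - xs = w := by funext k; simp [hw]
        simp only [traj, h0, Fin.snoc_last, h1]
        refine Finset.sum_congr rfl fun k _ => ?_
        simp [dotProduct, pow_two, hw, Pi.sub_apply]
        ring
      calc ∑ i, (∏ s : Fin (t+1), p (Fin.snoc τ i s)) *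
              ∑ k, (traj Z x0 xs (t+1) (Fin.snoc τ i) k - xs k) ^ 2
          = (∏ s, p (τ s)) * ∑ i, p i * ((w - Z i *ᵥ w) ⬝ᵥ (w - Z i *ᵥ w)) := by
            rw [Finset.mul_sum]
            refine Finset.sum_congr rfl fun i _ => ?_
            have hps : (∏ s : Fin (t+1), p ((Fin.snoc τ i : Fin (t+1) → Fin q) s))
                = (∏ s, p (τ s)) * p i := by
              rw [Fin.prod_univ_castSucc]
              simp
            rw [htraj i, hps]
            ring
        _ ≤ (∏ s, p (τ s)) * ((1 - c) * (w ⬝ᵥ w)) := by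
            refine mul_le_mul_of_nonneg_left ?_ (Finset.prod_nonneg fun s _ => hp _)
            exact step_le Z hsym hproj p hp1 hpd w
        _ = (1 - c) * ((∏ s, p (τ s)) * ∑ k, (traj Z x0 xs t τ k - xs k) ^ 2) := by
            rw [hwdot]; ring
    calc ∑ τ : Fin t → Fin q, ∑ i, (∏ s : Fin (t+1), p (Fin.snoc τ i s)) *
            ∑ k, (traj Z x0 xs (t+1) (Fin.snoc τ i) k - xs k) ^ 2
        ≤ ∑ τ : Fin t → Fin q, (1 - c) *
            ((∏ s, p (τ s)) * ∑ k, (traj Z x0 xs t τ k - xs k) ^ 2) :=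
          Finset.sum_le_sum fun τ _ => key τ
      _ = (1 - c) * ∑ τ : Fin t → Fin q,
            (∏ s, p (τ s)) * ∑ k, (traj Z x0 xs t τ k - xs k) ^ 2 := by
          rw [Finset.mul_sum]
      _ ≤ (1 - c) * ((1 - c) ^ t * ∑ k, (x0 k - xs k) ^ 2) :=
          mul_le_mul_of_nonneg_left ih h1c
      _ = (1 - c) ^ (t + 1) * ∑ k, (x0 k - xs k) ^ 2 := by ring
end
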